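/- The function A ↦ (det A)^{1/n} is concave on the set of positive semidefinite symmetric n×n real matrices: for positive semidefinite symmetric matrices A, B and α ∈ [0,1], det(αA + (1−α)B)^{1/n} ≥ α·(det A)^{1/n} + (1−α)·(det B)^{1/n}. -/

import Mathlib

open Matrix Finset

-- scalar AM-GM lemma
lemma mink_scalar {n : ℕ} (hn : 1 ≤ n) (μ : Fin n → ℝ) (hμ : ∀ i, 0 ≤ μ i) :
    1 + (∏ i, μ i) ^ ((1:ℝ)/n) ≤ (∏ i, (1 + μ i)) ^ ((1:ℝ)/n) := by
  have hn0 : (n:ℝ) ≠ 0 := Nat.cast_ne_zero.mpr (by omega)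
  have hpos : ∀ i, (0:ℝ) < 1 + μ i := fun i => by linarith [hμ i]
  set a : Fin n → ℝ := fun i => (1 + μ i)⁻¹ with ha
  set b : Fin n → ℝ := fun i => μ i * (1 + μ i)⁻¹ with hb
  have hann : ∀ i, 0 ≤ a i := fun i => inv_nonneg.mpr (hpos i).le
  have hbnn : ∀ i, 0 ≤ b i := fun i => mul_nonneg (hμ i) (inv_nonneg.mpr (hpos i).le)
  have hw : ∑ _i : Fin n, (1:ℝ)/n = 1 := by
    simp only [Finset.sum_const, Finset.card_univ, Fintype.card_fin, nsmul_eq_mul, one_div]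
    exact mul_inv_cancel₀ hn0
  have hab : ∀ i, a i + b i = 1 := fun i => by
    simp only [ha, hb]; field_simp
    exact div_self (hpos i).ne'
  have h1 : (∏ i, a i) ^ ((1:ℝ)/n) ≤ ∑ i, (1/n : ℝ) * a i := by
    rw [← Real.finset_prod_rpow _ _ (fun i _ => hann i)]
    exact Real.geom_mean_le_arith_mean_weighted _ _ _ (fun i _ => by positivity) hw
      (fun i _ => hann i)
  have h2 : (∏ i, b i) ^ ((1:ℝ)/n) ≤ ∑ i, (1/n : ℝ) * b i := by
    rw [← Real.finset_prod_rpow _ _ (fun i _ => hbnn i)]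
    exact Real.geom_mean_le_arith_mean_weighted _ _ _ (fun i _ => by positivity) hw
      (fun i _ => hbnn i)
  have hsum : (∏ i, a i) ^ ((1:ℝ)/n) + (∏ i, b i) ^ ((1:ℝ)/n) ≤ 1 := by
    calc _ ≤ (∑ i, (1/n : ℝ) * a i) + ∑ i, (1/n : ℝ) * b i := add_le_add h1 h2
    _ = ∑ i : Fin n, (1/n : ℝ) * (a i + b i) := by rw [← Finset.sum_add_distrib]; congr 1; ext i; ring
    _ = 1 := by simp only [hab, mul_one]; exact hw
  set P : ℝ := ∏ i, (1 + μ i) with hP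
  have hPnn : 0 ≤ P := Finset.prod_nonneg fun i _ => (hpos i).le
  have key := mul_le_mul_of_nonneg_left hsum (Real.rpow_nonneg hPnn ((1:ℝ)/n))
  rw [mul_one, mul_add, ← Real.mul_rpow hPnn (Finset.prod_nonneg fun i _ => hann i),
    ← Real.mul_rpow hPnn (Finset.prod_nonneg fun i _ => hbnn i),
    ← Finset.prod_mul_distrib, ← Finset.prod_mul_distrib] at key
  have e1 : ∀ i, (1 + μ i) * a i = 1 := fun i => mul_inv_cancel₀ (hpos i).ne'
  have e2 : ∀ i, (1 + μ i) * b i = μ i := fun i => by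
    simp only [hb]
    field_simp
    rw [mul_comm]
    exact (div_eq_iff (hpos i).ne').mpr (mul_comm _ _)
  simp only [e1, e2, Finset.prod_const_one, Real.one_rpow] at key
  linarith

lemma det_one_add_psd {n : ℕ} {C : Matrix (Fin n) (Fin n) ℝ} (hC : C.PosSemidef) :
    (1 + C).det = ∏ i, (1 + hC.1.eigenvalues i) := by
  set V : Matrix (Fin n) (Fin n) ℝ := (hC.1.eigenvectorUnitary : Matrix (Fin n) (Fin n) ℝ) with hV
  have hVmem := (hC.1.eigenvectorUnitary).2
  have hVV : V * star V = 1 := (Matrix.mem_unitaryGroup_iff).mp hVmem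
  have h1C : 1 + C = V * diagonal (fun i => 1 + hC.1.eigenvalues i) * star V := by
    have hspec := hC.1.spectral_theorem
    rw [Unitary.conjStarAlgAut_apply] at hspec
    have : (diagonal (fun i => 1 + hC.1.eigenvalues i) : Matrix (Fin n) (Fin n) ℝ)
        = 1 + diagonal (RCLike.ofReal ∘ hC.1.eigenvalues) := by
      rw [← diagonal_one, diagonal_add]
      rfl
    rw [this, Matrix.mul_add, Matrix.add_mul, Matrix.mul_one, hVV, ← hspec]
  rw [h1C, det_mul_right_comm, hVV, Matrix.one_mul, det_diagonal]

lemma psd_decomp {n : ℕ} {A B : Matrix (Fin n) (Fin n) ℝ} (hA : A.PosDef) (hB : B.PosSemidef) :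
    ∃ μ : Fin n → ℝ, (∀ i, 0 ≤ μ i) ∧ (A + B).det = A.det * ∏ i, (1 + μ i) ∧
      B.det = A.det * ∏ i, μ i := by
  set S : Matrix (Fin n) (Fin n) ℝ := (open MatrixOrder in CFC.sqrt A) with hSdef
  have hS : S.PosSemidef := (open MatrixOrder in (CFC.sqrt_nonneg A).posSemidef)
  have hSS : S * S = A := (open MatrixOrder in CFC.sqrt_mul_sqrt_self A hA.posSemidef.nonneg)
  have hdetS : S.det * S.det = A.det := by rw [← det_mul, hSS]
  have hdS : IsUnit S.det := by
    rw [isUnit_iff_ne_zero]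
    intro h
    rw [h, mul_zero] at hdetS
    exact hA.det_pos.ne hdetS
  have hSi : S * S⁻¹ = 1 := Matrix.mul_nonsing_inv S hdS
  have hiS : S⁻¹ * S = 1 := Matrix.nonsing_inv_mul S hdS
  set C : Matrix (Fin n) (Fin n) ℝ := S⁻¹ * B * S⁻¹ with hCdef
  have hiH : (S⁻¹)ᴴ = S⁻¹ := hS.inv.isHermitian
  have hC : C.PosSemidef := by
    have := hB.conjTranspose_mul_mul_same (B := S⁻¹)
    rwa [hiH] at this
  refine ⟨hC.1.eigenvalues, hC.eigenvalues_nonneg, ?_, ?_⟩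
  · have hSCS : S * C * S = B := by
      calc S * (S⁻¹ * B * S⁻¹) * S = (S * S⁻¹) * B * (S⁻¹ * S) := by
            simp only [Matrix.mul_assoc]
      _ = B := by rw [hSi, hiS, Matrix.one_mul, Matrix.mul_one]
    have hAB : A + B = S * (1 + C) * S := by
      rw [Matrix.mul_add, Matrix.add_mul, Matrix.mul_one, hSS, hSCS]
    rw [hAB, det_mul, det_mul, det_one_add_psd hC, ← hdetS]
    ring
  · have : B.det = S.det * C.det * S.det := by
      have h0 := isUnit_iff_ne_zero.mp hdS
      rw [hCdef, det_mul, det_mul, det_nonsing_inv, Ring.inverse_eq_inv']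
      field_simp
    rw [this, hC.1.det_eq_prod_eigenvalues, ← hdetS]
    norm_num [sq]
    ring

lemma psd_det_nonneg {n : ℕ} {A : Matrix (Fin n) (Fin n) ℝ} (hA : A.PosSemidef) :
    0 ≤ A.det := by
  rw [hA.1.det_eq_prod_eigenvalues]
  exact Finset.prod_nonneg fun i _ => by simpa using hA.eigenvalues_nonneg i

lemma psd_posdef_of_det_ne_zero {n : ℕ} {A : Matrix (Fin n) (Fin n) ℝ}
    (hA : A.PosSemidef) (h : A.det ≠ 0) : A.PosDef := by
  refine PosDef.of_dotProduct_mulVec_pos hA.1 fun x hx => ?_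
  rcases lt_or_eq_of_le (hA.dotProduct_mulVec_nonneg x) with h' | h'
  · exact h'
  · exfalso
    have hz : A *ᵥ x = 0 := (hA.dotProduct_mulVec_zero_iff x).mp h'.symm
    exact h (Matrix.exists_mulVec_eq_zero_iff.mp ⟨x, hx, hz⟩)

lemma psd_smul {n : ℕ} {A : Matrix (Fin n) (Fin n) ℝ} (hA : A.PosSemidef)
    {c : ℝ} (hc : 0 ≤ c) : (c • A).PosSemidef := by
  refine PosSemidef.of_dotProduct_mulVec_nonneg ?_ fun x => ?_
  · rw [Matrix.IsHermitian, conjTranspose_smul, star_trivial, hA.1]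
  · rw [smul_mulVec, dotProduct_smul, smul_eq_mul]
    exact mul_nonneg hc (hA.dotProduct_mulVec_nonneg x)

lemma mink_pd {n : ℕ} (hn : 1 ≤ n) {A B : Matrix (Fin n) (Fin n) ℝ}
    (hA : A.PosDef) (hB : B.PosSemidef) :
    A.det ^ ((1:ℝ)/n) + B.det ^ ((1:ℝ)/n) ≤ (A + B).det ^ ((1:ℝ)/n) := by
  obtain ⟨μ, hμ, h1, h2⟩ := psd_decomp hA hB
  have hdA : (0:ℝ) ≤ A.det := hA.det_pos.le
  have hprod : (0:ℝ) ≤ ∏ i, μ i := Finset.prod_nonneg fun i _ => hμ i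
  have hprod1 : (0:ℝ) ≤ ∏ i, (1 + μ i) :=
    Finset.prod_nonneg fun i _ => by linarith [hμ i]
  rw [h1, h2, Real.mul_rpow hdA hprod, Real.mul_rpow hdA hprod1]
  have key := mink_scalar hn μ hμ
  calc A.det ^ ((1:ℝ)/n) + A.det ^ ((1:ℝ)/n) * (∏ i, μ i) ^ ((1:ℝ)/n)
      = A.det ^ ((1:ℝ)/n) * (1 + (∏ i, μ i) ^ ((1:ℝ)/n)) := by ring
    _ ≤ A.det ^ ((1:ℝ)/n) * (∏ i, (1 + μ i)) ^ ((1:ℝ)/n) :=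
        mul_le_mul_of_nonneg_left key (Real.rpow_nonneg hdA _)

lemma mink {n : ℕ} (hn : 1 ≤ n) {A B : Matrix (Fin n) (Fin n) ℝ}
    (hA : A.PosSemidef) (hB : B.PosSemidef) :
    A.det ^ ((1:ℝ)/n) + B.det ^ ((1:ℝ)/n) ≤ (A + B).det ^ ((1:ℝ)/n) := by
  have hn0 : ((1:ℝ)/n) ≠ 0 := by
    simp only [ne_eq, div_eq_zero_iff, one_ne_zero, Nat.cast_eq_zero, false_or]
    omega
  by_cases hdA : A.det = 0
  · by_cases hdB : B.det = 0
    · rw [hdA, hdB, Real.zero_rpow hn0]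
      norm_num
      exact Real.rpow_nonneg (psd_det_nonneg (hA.add hB)) _
    · have hBpd := psd_posdef_of_det_ne_zero hB hdB
      have := mink_pd hn hBpd hA
      rw [add_comm B A] at this
      linarith
  · exact mink_pd hn (psd_posdef_of_det_ne_zero hA hdA) hB

theorem stmt9 (n : ℕ) (hn : 1 ≤ n) (A B : Matrix (Fin n) (Fin n) ℝ)
    (hA : A.PosSemidef) (hB : B.PosSemidef) (α : ℝ) (hα : α ∈ Set.Icc (0:ℝ) 1) :
    α * A.det ^ ((1:ℝ)/n) + (1 - α) * B.det ^ ((1:ℝ)/n)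
      ≤ (α • A + (1 - α) • B).det ^ ((1:ℝ)/n) := by
  obtain ⟨h0, h1⟩ := hα
  have h1' : (0:ℝ) ≤ 1 - α := by linarith
  have hncast : (n:ℝ) ≠ 0 := Nat.cast_ne_zero.mpr (by omega)
  have hpow : ∀ c : ℝ, 0 ≤ c → ((c ^ n : ℝ)) ^ ((1:ℝ)/n) = c := by
    intro c hc
    rw [← Real.rpow_natCast c n, ← Real.rpow_mul hc, mul_one_div, div_self hncast,
      Real.rpow_one]
  have hdet : ∀ (c : ℝ) (M : Matrix (Fin n) (Fin n) ℝ), (c • M).det = c ^ n * M.det := by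
    intro c M
    rw [det_smul, Fintype.card_fin]
  have key := mink hn (psd_smul hA h0) (psd_smul hB h1')
  rw [hdet α A, hdet (1-α) B,
    Real.mul_rpow (pow_nonneg h0 n) (psd_det_nonneg hA),
    Real.mul_rpow (pow_nonneg h1' n) (psd_det_nonneg hB),
    hpow α h0, hpow (1-α) h1'] at key
  exact key
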